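/- Let Λ ⊂ Z^d be finite and τ ∈ {−1,1}^{Z^d}. The finite-volume PCA with transition probability P_Λ^τ(σ|η) has a unique stationary measure, namely ν_Λ^τ(σ) = (W_Λ^τ)^{-1} ∏_{i∈Λ} e^{βhσ_i} · cosh(β Σ_{j∈Z^d} k(i−j) σ̃_j + βh) · e^{β σ_i Σ_{j∈Λ^c} k(i−j) τ_j}, where σ̃ = σ_Λ τ_{Λ^c} and W_Λ^τ is the normalization constant. Moreover, ν_Λ^τ is reversible for P_Λ^τ, i.e. detailed balance holds: P_Λ^τ(σ|η) ν_Λ^τ(η) = P_Λ^τ(η|σ) ν_Λ^τ(σ) for all σ, η ∈ {−1,1}^Λ. -/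

import Mathlib

open MeasureTheory Filter

namespace PCA

noncomputable section

/-- Sites of the lattice `ℤ^d`. -/
abbrev Site (d : ℕ) := Fin d → ℤ

/-- Spin configurations on `ℤ^d` with spins in `{-1,1}` encoded by `Bool`. -/
abbrev Conf (d : ℕ) := Site d → Bool

/-- The real value of a spin: `true ↦ 1`, `false ↦ -1`. -/
def val (b : Bool) : ℝ := if b then 1 else -1

/-- Squared Euclidean norm of a site. -/
def normSq {d : ℕ} (i : Site d) : ℤ := ∑ t, (i t) ^ 2

/-- The local field `Σ_j k(i-j) η_j`. -/
def field {d : ℕ} (k : Site d → ℝ) (i : Site d) (η : Conf d) : ℝ :=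
  ∑' j : Site d, k (i - j) * val (η j)

/-- Single site updating probability
`p_i(s|η) = (1 + s tanh(β Σ_j k(i-j) η_j + β h))/2`. -/
def pval {d : ℕ} (β h : ℝ) (k : Site d → ℝ) (i : Site d) (s : Bool) (η : Conf d) : ℝ :=
  (1 + val s * Real.tanh (β * field k i η + β * h)) / 2

/-- The configuration equal to `a` on `Λ` and to `τ` outside `Λ`. -/
def fill {d : ℕ} (Λ : Finset (Site d)) (a : ↥Λ → Bool) (τ : Conf d) : Conf d :=
  fun j => if h : j ∈ Λ then a ⟨j, h⟩ else τ j

/-- Finite volume PCA transition probability with boundary condition `τ`: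
`P_Λ^τ(σ|η) = ∏_{i ∈ Λ} p_i(σ_i | η_Λ τ_{Λ^c})`. -/
def Pfin {d : ℕ} (β h : ℝ) (k : Site d → ℝ) (Λ : Finset (Site d)) (τ : Conf d)
    (σ η : ↥Λ → Bool) : ℝ :=
  ∏ i : ↥Λ, pval β h k i.1 (σ i) (fill Λ η τ)

/-- The boundary field `Σ_{j ∈ Λ^c} k(i-j) τ_j`. -/
def outField {d : ℕ} (k : Site d → ℝ) (Λ : Finset (Site d)) (τ : Conf d) (i : Site d) : ℝ :=
  ∑' j : Site d, if j ∈ Λ then 0 else k (i - j) * val (τ j)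

/-- Unnormalized stationary measure of the finite volume PCA:
`∏_{i∈Λ} e^{βhσ_i} cosh(β Σ_j k(i-j) σ̃_j + βh) e^{β σ_i Σ_{j∈Λ^c} k(i-j) τ_j}`. -/
def nuNum {d : ℕ} (β h : ℝ) (k : Site d → ℝ) (Λ : Finset (Site d)) (τ : Conf d)
    (σ : ↥Λ → Bool) : ℝ :=
  ∏ i : ↥Λ,
    Real.exp (β * h * val (σ i))
      * Real.cosh (β * field k i.1 (fill Λ σ τ) + β * h)
      * Real.exp (β * val (σ i) * outField k Λ τ i.1)

/-- The normalized stationary measure `ν_Λ^τ`. -/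
def nu {d : ℕ} (β h : ℝ) (k : Site d → ℝ) (Λ : Finset (Site d)) (τ : Conf d)
    (σ : ↥Λ → Bool) : ℝ :=
  nuNum β h k Λ τ σ / ∑ σ' : ↥Λ → Bool, nuNum β h k Λ τ σ'

lemma exp_form (x v : ℝ) (hv : v = 1 ∨ v = -1) :
    (1 + v * Real.tanh x) / 2 = Real.exp (v * x) / (2 * Real.cosh x) := by
  have hc := Real.cosh_pos x
  have he := (Real.exp_pos x).ne'
  rcases hv with hv | hv <;> subst hv <;>
    simp only [one_mul, neg_one_mul] <;>
    rw [Real.tanh_eq_sinh_div_cosh, Real.sinh_eq, Real.cosh_eq, Real.exp_neg] <;>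
    field_simp <;> ring

lemma val_one_or (b : Bool) : val b = 1 ∨ val b = -1 := by cases b <;> simp [val]

lemma pval_eq_exp {d : ℕ} (β h : ℝ) (k : Site d → ℝ) (i : Site d) (s : Bool) (η : Conf d) :
    pval β h k i s η = Real.exp (val s * (β * field k i η + β * h)) /
      (2 * Real.cosh (β * field k i η + β * h)) := by
  rw [pval, exp_form _ _ (val_one_or s)]

lemma pval_pos {d : ℕ} (β h : ℝ) (k : Site d → ℝ) (i : Site d) (s : Bool) (η : Conf d) :
    0 < pval β h k i s η := by
  rw [pval_eq_exp]
  exact div_pos (Real.exp_pos _) (mul_pos two_pos (Real.cosh_pos _))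

lemma pval_sum {d : ℕ} (β h : ℝ) (k : Site d → ℝ) (i : Site d) (η : Conf d) :
    pval β h k i true η + pval β h k i false η = 1 := by
  simp [pval, val]; ring

lemma supp_finite {d : ℕ} (R : ℝ) (hR : 0 < R) (k : Site d → ℝ)
    (hrange : ∀ i : Site d, R ^ 2 < (normSq i : ℝ) → k i = 0) :
    (Function.support k).Finite := by
  apply Set.Finite.subset (Finset.finite_toSet
    (Fintype.piFinset fun _ : Fin d => Finset.Icc (-⌈R⌉) ⌈R⌉))
  intro i hi
  simp only [Finset.mem_coe, Fintype.mem_piFinset, Finset.mem_Icc]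
  intro t
  have hle : (normSq i : ℝ) ≤ R ^ 2 := by
    by_contra hgt
    exact hi (hrange i (lt_of_not_ge hgt))
  have h1 : (i t : ℝ) ^ 2 ≤ (normSq i : ℝ) := by
    have : (i t) ^ 2 ≤ normSq i :=
      Finset.single_le_sum (f := fun t => (i t) ^ 2) (fun s _ => sq_nonneg _) (Finset.mem_univ t)
    exact_mod_cast this
  have h2 : |(i t : ℝ)| ≤ R := by
    rw [← Real.sqrt_sq hR.le]
    rw [← Real.sqrt_sq_eq_abs]
    exact Real.sqrt_le_sqrt (h1.trans hle)
  have hceil : (R : ℝ) ≤ (⌈R⌉ : ℝ) := Int.le_ceil R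
  rw [abs_le] at h2
  constructor
  · have : (-(⌈R⌉:ℝ)) ≤ (i t : ℝ) := le_trans (by linarith [h2.1]) le_rfl
    exact_mod_cast this
  · have : (i t : ℝ) ≤ (⌈R⌉:ℝ) := h2.2.trans hceil
    exact_mod_cast this

lemma field_fill {d : ℕ} (k : Site d → ℝ) (hfin : (Function.support k).Finite)
    (Λ : Finset (Site d)) (τ : Conf d) (i : Site d) (η : ↥Λ → Bool) :
    field k i (fill Λ η τ) = (∑ j : ↥Λ, k (i - j.1) * val (η j)) + outField k Λ τ i := by
  classical
  set T : Finset (Site d) := hfin.toFinset.image (fun m => i - m) with hT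
  have hTk : ∀ j : Site d, j ∉ T → k (i - j) = 0 := by
    intro j hj
    by_contra hk
    exact hj (Finset.mem_image.2 ⟨i - j, hfin.mem_toFinset.2 hk, by abel⟩)
  set s : Finset (Site d) := T ∪ Λ with hs
  have h1 : field k i (fill Λ η τ) = ∑ j ∈ s, k (i - j) * val (fill Λ η τ j) :=
    tsum_eq_sum (fun j hj => by
      rw [hTk j (fun hh => hj (Finset.mem_union_left _ hh)), zero_mul])
  have h2 : outField k Λ τ i = ∑ j ∈ s, (if j ∈ Λ then 0 else k (i - j) * val (τ j)) :=
    tsum_eq_sum (fun j hj => by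
      rw [if_neg (fun hh => hj (Finset.mem_union_right _ hh)),
        hTk j (fun hh => hj (Finset.mem_union_left _ hh)), zero_mul])
  rw [h1, h2]
  set G : Site d → ℝ := fun j => if hj : j ∈ Λ then k (i - j) * val (η ⟨j, hj⟩) else 0 with hG
  have h4 : ∑ j ∈ s, k (i - j) * val (fill Λ η τ j)
      = ∑ j ∈ s, G j + ∑ j ∈ s, (if j ∈ Λ then 0 else k (i - j) * val (τ j)) := by
    rw [← Finset.sum_add_distrib]
    refine Finset.sum_congr rfl (fun j _ => ?_)
    by_cases hj : j ∈ Λ <;> simp [G, fill, hj]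
  rw [h4]
  congr 1
  have h5 : ∑ j ∈ Λ, G j = ∑ j ∈ s, G j :=
    Finset.sum_subset Finset.subset_union_right (fun j _ hj => dif_neg hj)
  rw [← h5, ← Finset.sum_attach Λ G]
  exact Finset.sum_congr rfl (fun j _ => by simp [G, j.2])

/-- For finite `Λ ⊂ ℤ^d` and boundary condition `τ`, the finite volume PCA
`P_Λ^τ` has `ν_Λ^τ` as its unique stationary probability measure, and `ν_Λ^τ` is
reversible for `P_Λ^τ`. -/
theorem stmt5 {d : ℕ} (hd : 0 < d) (β h R : ℝ) (hβ : 0 < β) (hR : 0 < R)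
    (k : Site d → ℝ) (hsym : ∀ i : Site d, k (-i) = k i)
    (hrange : ∀ i : Site d, R ^ 2 < (normSq i : ℝ) → k i = 0)
    (Λ : Finset (Site d)) (τ : Conf d) :
    (∀ σ : ↥Λ → Bool, 0 ≤ nu β h k Λ τ σ) ∧
    (∑ σ : ↥Λ → Bool, nu β h k Λ τ σ = 1) ∧
    (∀ σ : ↥Λ → Bool,
      ∑ η : ↥Λ → Bool, Pfin β h k Λ τ σ η * nu β h k Λ τ η = nu β h k Λ τ σ) ∧
    (∀ ν' : (↥Λ → Bool) → ℝ, (∀ η, 0 ≤ ν' η) → (∑ η : ↥Λ → Bool, ν' η = 1) →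
      (∀ σ : ↥Λ → Bool, ∑ η : ↥Λ → Bool, Pfin β h k Λ τ σ η * ν' η = ν' σ) →
      ν' = nu β h k Λ τ) ∧
    (∀ σ η : ↥Λ → Bool,
      Pfin β h k Λ τ σ η * nu β h k Λ τ η = Pfin β h k Λ τ η σ * nu β h k Λ τ σ) := by
  classical
  have hfin : (Function.support k).Finite := supp_finite R hR k hrange
  set E : Site d → ℝ := outField k Λ τ with hE
  set A : (↥Λ → Bool) → ↥Λ → ℝ :=
    fun η i => β * ((∑ j : ↥Λ, k (i.1 - j.1) * val (η j)) + E i.1) + β * h with hAdef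
  have hA : ∀ (η : ↥Λ → Bool) (i : ↥Λ),
      β * field k i.1 (fill Λ η τ) + β * h = A η i := by
    intro η i
    simp only [hAdef, hE]
    rw [field_fill k hfin Λ τ i.1 η]
  -- column sums are 1
  have colsum : ∀ η : ↥Λ → Bool, ∑ σ : ↥Λ → Bool, Pfin β h k Λ τ σ η = 1 := by
    intro η
    have hps := Finset.prod_univ_sum (fun _ : ↥Λ => (Finset.univ : Finset Bool))
      (fun i s => pval β h k i.1 s (fill Λ η τ))
    rw [Fintype.piFinset_univ] at hps
    have hthis : ∑ σ : ↥Λ → Bool, Pfin β h k Λ τ σ η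
        = ∏ i : ↥Λ, ∑ s : Bool, pval β h k i.1 s (fill Λ η τ) := by
      rw [hps]; rfl
    rw [hthis]
    refine Finset.prod_eq_one (fun i _ => ?_)
    rw [Fintype.sum_bool]
    exact pval_sum β h k i.1 (fill Λ η τ)
  -- positivity
  have Ppos : ∀ σ η : ↥Λ → Bool, 0 < Pfin β h k Λ τ σ η := fun σ η =>
    Finset.prod_pos (fun i _ => pval_pos β h k i.1 (σ i) (fill Λ η τ))
  have numpos : ∀ σ : ↥Λ → Bool, 0 < nuNum β h k Λ τ σ := fun σ =>
    Finset.prod_pos (fun i _ => by positivity)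
  have Wpos : 0 < ∑ σ' : ↥Λ → Bool, nuNum β h k Λ τ σ' :=
    Finset.sum_pos (fun σ _ => numpos σ) Finset.univ_nonempty
  have nupos : ∀ σ : ↥Λ → Bool, 0 < nu β h k Λ τ σ := fun σ =>
    div_pos (numpos σ) Wpos
  have normNu : ∑ σ : ↥Λ → Bool, nu β h k Λ τ σ = 1 := by
    have : ∑ σ : ↥Λ → Bool, nu β h k Λ τ σ
        = (∑ σ : ↥Λ → Bool, nuNum β h k Λ τ σ) / (∑ σ' : ↥Λ → Bool, nuNum β h k Λ τ σ') := by
      rw [Finset.sum_div]; rfl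
    rw [this, div_self Wpos.ne']
  -- the symmetric exponent
  set S : (↥Λ → Bool) → (↥Λ → Bool) → ℝ := fun σ η =>
    β * (∑ i : ↥Λ, ∑ j : ↥Λ, k (i.1 - j.1) * (val (σ i) * val (η j)))
      + ∑ i : ↥Λ, (β * E i.1 + β * h) * (val (σ i) + val (η i)) with hS
  have prodform : ∀ σ η : ↥Λ → Bool,
      Pfin β h k Λ τ σ η * nuNum β h k Λ τ η
        = (∏ _i : ↥Λ, (1/2 : ℝ)) * Real.exp (S σ η) := by
    intro σ η
    have step1 : Pfin β h k Λ τ σ η * nuNum β h k Λ τ η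
        = ∏ i : ↥Λ, ((1/2 : ℝ) * Real.exp
            (val (σ i) * A η i + β * h * val (η i) + β * val (η i) * E i.1)) := by
      rw [Pfin, nuNum, ← Finset.prod_mul_distrib]
      refine Finset.prod_congr rfl (fun i _ => ?_)
      rw [pval_eq_exp, hA η i]
      have hc := (Real.cosh_pos (A η i)).ne'
      rw [show val (σ i) * A η i + β * h * val (η i) + β * val (η i) * E i.1
          = val (σ i) * A η i + (β * h * val (η i) + β * val (η i) * E i.1) by ring,
        Real.exp_add, Real.exp_add]
      simp only [hE]
      field_simp
    rw [step1, Finset.prod_mul_distrib, ← Real.exp_sum]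
    congr 1
    simp only [hS]
    rw [Finset.mul_sum, ← Finset.sum_add_distrib]
    congr 1
    refine Finset.sum_congr rfl (fun i _ => ?_)
    have hin : ∑ j : ↥Λ, k (i.1 - j.1) * (val (σ i) * val (η j))
        = val (σ i) * ∑ j : ↥Λ, k (i.1 - j.1) * val (η j) := by
      rw [Finset.mul_sum]
      exact Finset.sum_congr rfl (fun j _ => by ring)
    rw [hin]
    simp only [hAdef]
    ring
  have Ssymm : ∀ σ η : ↥Λ → Bool, S σ η = S η σ := by
    intro σ η
    simp only [hS]
    congr 1
    · congr 1
      rw [Finset.sum_comm]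
      refine Finset.sum_congr rfl (fun j _ => Finset.sum_congr rfl (fun i _ => ?_))
      rw [show i.1 - j.1 = -(j.1 - i.1) by abel, hsym]
      ring
    · exact Finset.sum_congr rfl (fun i _ => by ring)
  -- detailed balance
  have keyNum : ∀ σ η : ↥Λ → Bool,
      Pfin β h k Λ τ σ η * nuNum β h k Λ τ η = Pfin β h k Λ τ η σ * nuNum β h k Λ τ σ := by
    intro σ η
    rw [prodform σ η, prodform η σ, Ssymm σ η]
  have keyNu : ∀ σ η : ↥Λ → Bool,
      Pfin β h k Λ τ σ η * nu β h k Λ τ η = Pfin β h k Λ τ η σ * nu β h k Λ τ σ := by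
    intro σ η
    rw [nu, nu, ← mul_div_assoc, ← mul_div_assoc, keyNum σ η]
  -- stationarity of nu
  have statNu : ∀ σ : ↥Λ → Bool,
      ∑ η : ↥Λ → Bool, Pfin β h k Λ τ σ η * nu β h k Λ τ η = nu β h k Λ τ σ := by
    intro σ
    calc ∑ η : ↥Λ → Bool, Pfin β h k Λ τ σ η * nu β h k Λ τ η
        = ∑ η : ↥Λ → Bool, Pfin β h k Λ τ η σ * nu β h k Λ τ σ :=
          Finset.sum_congr rfl (fun η _ => keyNu σ η)
      _ = (∑ η : ↥Λ → Bool, Pfin β h k Λ τ η σ) * nu β h k Λ τ σ := by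
          rw [Finset.sum_mul]
      _ = nu β h k Λ τ σ := by rw [colsum σ, one_mul]
  refine ⟨fun σ => (nupos σ).le, normNu, statNu, ?_, keyNu⟩
  -- uniqueness
  intro ν' hpos hsum hstat
  obtain ⟨σ0, -, hmin⟩ := Finset.exists_min_image Finset.univ
    (fun σ => ν' σ / nu β h k Λ τ σ) Finset.univ_nonempty
  set c : ℝ := ν' σ0 / nu β h k Λ τ σ0 with hc
  have hge : ∀ σ, c * nu β h k Λ τ σ ≤ ν' σ := by
    intro σ
    have h1 := hmin σ (Finset.mem_univ σ)
    have h2 := nupos σ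
    calc c * nu β h k Λ τ σ ≤ (ν' σ / nu β h k Λ τ σ) * nu β h k Λ τ σ :=
          mul_le_mul_of_nonneg_right h1 h2.le
      _ = ν' σ := div_mul_cancel₀ _ h2.ne'
  set g : (↥Λ → Bool) → ℝ := fun σ => ν' σ - c * nu β h k Λ τ σ with hg
  have gnonneg : ∀ σ, 0 ≤ g σ := fun σ => sub_nonneg.2 (hge σ)
  have gstat : ∀ σ, ∑ η : ↥Λ → Bool, Pfin β h k Λ τ σ η * g η = g σ := by
    intro σ
    have hterm : ∀ η, Pfin β h k Λ τ σ η * g η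
        = Pfin β h k Λ τ σ η * ν' η - c * (Pfin β h k Λ τ σ η * nu β h k Λ τ η) := by
      intro η; simp only [hg]; ring
    rw [Finset.sum_congr rfl (fun η _ => hterm η), Finset.sum_sub_distrib, ← Finset.mul_sum,
      hstat σ, statNu σ]
  have g0 : g σ0 = 0 := by
    simp only [hg, hc]
    rw [div_mul_cancel₀ _ (nupos σ0).ne', sub_self]
  have gzero : ∀ η, g η = 0 := by
    intro η
    have hsumz : ∑ η' : ↥Λ → Bool, Pfin β h k Λ τ σ0 η' * g η' = 0 := by
      rw [gstat σ0, g0]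
    have hmem := (Finset.sum_eq_zero_iff_of_nonneg
      (fun η' _ => mul_nonneg (Ppos σ0 η').le (gnonneg η'))).1 hsumz η (Finset.mem_univ η)
    rcases mul_eq_zero.1 hmem with hP | hgz
    · exact absurd hP (Ppos σ0 η).ne'
    · exact hgz
  have hceq : c = 1 := by
    have h1 : ∑ η : ↥Λ → Bool, ν' η = ∑ η : ↥Λ → Bool, c * nu β h k Λ τ η :=
      Finset.sum_congr rfl (fun η _ => by
        have hz := gzero η
        simp only [hg] at hz
        linarith)
    rw [hsum, ← Finset.mul_sum, normNu, mul_one] at h1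
    exact h1.symm
  funext σ
  have hz := gzero σ
  simp only [hg, hceq] at hz
  linarith

end
end PCA
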